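/- Let f : Ξ_out → ℂ be Δσ-twisted positive definite and normalized, where Δσ = σ_out − S^⊤σ_in S, and suppose f satisfies the homomorphism-type identity f(ξ+η) = exp((i/2)Δσ(ξ,η))·f(ξ)f(η) for all ξ,η. Then |f(ξ)| = 1 for all ξ, Δσ = 0, and f(ξ) = exp(i⟨λ,ξ⟩) for some λ in the dual of Ξ_out provided f is continuous and Ξ_out is finite dimensional. -/

import Mathlib

open Complex BigOperators

/-- The quadratic form associated to the σ-twisted matrix
`M_{kℓ} = χ(ξ_ℓ − ξ_k) · exp(−(i/2) σ(ξ_k, ξ_ℓ))`. -/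
noncomputable def twistedSum {Ξ : Type*} [AddCommGroup Ξ] (σ : Ξ → Ξ → ℝ) (χ : Ξ → ℂ)
    {N : ℕ} (ξ : Fin N → Ξ) (c : Fin N → ℂ) : ℂ :=
  ∑ k, ∑ l, (starRingEnd ℂ) (c k) * c l * χ (ξ l - ξ k) *
    Complex.exp (-(Complex.I / 2) * ((σ (ξ k) (ξ l) : ℝ) : ℂ))

/-- `χ` is σ-twisted positive definite: every matrix
`M_{kℓ} = χ(ξ_ℓ − ξ_k) exp(−(i/2)σ(ξ_k,ξ_ℓ))` is positive semidefinite, expressed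
via nonnegativity of the associated quadratic form. -/
def IsTwistedPosDef {Ξ : Type*} [AddCommGroup Ξ] (σ : Ξ → Ξ → ℝ) (χ : Ξ → ℂ) : Prop :=
  ∀ (N : ℕ) (ξ : Fin N → Ξ) (c : Fin N → ℂ),
    0 ≤ (twistedSum σ χ ξ c).re ∧ (twistedSum σ χ ξ c).im = 0

lemma pi_trick {d : ℝ} (h : ∀ t : ℝ, Complex.exp (Complex.I * ((d * t : ℝ) : ℂ)) = 1) :
    d = 0 := by
  by_contra hd
  have h1 := h (Real.pi / d)
  rw [mul_div_cancel₀ _ hd] at h1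
  rw [show Complex.I * ((Real.pi : ℝ) : ℂ) = (Real.pi : ℂ) * Complex.I by ring,
    Complex.exp_pi_mul_I] at h1
  norm_num at h1

lemma exp_line_unique {b b' : ℝ}
    (h : ∀ t : ℝ, Complex.exp (Complex.I * (b : ℂ) * (t : ℂ)) =
      Complex.exp (Complex.I * (b' : ℂ) * (t : ℂ))) : b = b' := by
  have : b - b' = 0 := by
    apply pi_trick
    intro t
    have ht := h t
    calc Complex.exp (Complex.I * (((b - b') * t : ℝ) : ℂ))
        = Complex.exp (Complex.I * (b : ℂ) * (t : ℂ)) /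
          Complex.exp (Complex.I * (b' : ℂ) * (t : ℂ)) := by
          rw [← Complex.exp_sub]; congr 1; push_cast; ring
      _ = 1 := by rw [ht, div_self (Complex.exp_ne_zero _)]
  linarith

lemma cont_char_real (g : ℝ → ℂ) (hc : Continuous g) (h0 : g 0 = 1)
    (hm : ∀ s t : ℝ, g (s + t) = g s * g t) (habs : ∀ t, ‖g t‖ = 1) :
    ∃ b : ℝ, ∀ t : ℝ, g t = Complex.exp (Complex.I * (b : ℂ) * (t : ℂ)) := by
  set G : ℝ → ℂ := fun t => ∫ s in (0:ℝ)..t, g s with hGdef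
  have hG : ∀ t : ℝ, HasDerivAt G (g t) t := fun t =>
    intervalIntegral.integral_hasDerivAt_right (hc.intervalIntegrable 0 t)
      (hc.aestronglyMeasurable.stronglyMeasurableAtFilter) hc.continuousAt
  have hGa : ∃ a : ℝ, G a ≠ 0 := by
    by_contra h
    push_neg at h
    have h1 : HasDerivAt G 0 0 := by
      rw [show G = fun _ => (0:ℂ) from funext h]; exact hasDerivAt_const 0 0
    have := (hG 0).unique h1
    rw [h0] at this; exact one_ne_zero this
  obtain ⟨a, ha⟩ := hGa
  have key : ∀ t : ℝ, g t = (G (t + a) - G t) / G a := by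
    intro t
    have h1 : (∫ x in t..(t+a), g x) = g t * G a := by
      have h2 : (∫ x in (0:ℝ)..a, g (x + t)) = ∫ x in (0+t)..(a+t), g x :=
        intervalIntegral.integral_comp_add_right g t
      rw [zero_add, add_comm a t] at h2
      rw [← h2]
      have : ∀ x : ℝ, g (x + t) = g x * g t := fun x => hm x t
      simp only [this]
      rw [intervalIntegral.integral_mul_const]
      ring
    have h3 : G (t + a) - G t = ∫ x in t..(t+a), g x :=
      intervalIntegral.integral_interval_sub_left (hc.intervalIntegrable 0 (t+a))
        (hc.intervalIntegrable 0 t)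
    rw [h3, h1, mul_div_assoc, div_self ha, mul_one]
  have hgfun : g = fun t => (G (t + a) - G t) / G a := funext key
  have hdiff : ∀ t : ℝ, HasDerivAt g ((g (t + a) - g t) / G a) t := by
    intro t
    have h := (((hG (t + a)).comp_add_const t a).sub (hG t)).div_const (G a)
    rw [show (fun x => ((fun x => G (x + a)) - G) x / G a) = g from hgfun.symm] at h
    exact h
  set c : ℂ := (g (0 + a) - g 0) / G a with hcdef
  have hderc : ∀ t : ℝ, HasDerivAt g (g t * c) t := by
    intro t
    have h1 : HasDerivAt (fun s : ℝ => g (t + s)) ((g ((t + 0) + a) - g (t + 0)) / G a) 0 :=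
      (hdiff (t + 0)).comp_const_add t 0
    have h2 : HasDerivAt (fun s : ℝ => g t * g s) (g t * c) 0 := (hdiff 0).const_mul (g t)
    have h3 : (fun s : ℝ => g (t + s)) = fun s : ℝ => g t * g s := funext fun s => hm t s
    rw [h3] at h1
    have h4 := h1.unique h2
    rw [add_zero] at h4
    rw [← h4]
    simpa using hdiff t
  have hexp : ∀ t : ℝ, HasDerivAt (fun t : ℝ => Complex.exp (-(c * (t:ℂ))))
      (-c * Complex.exp (-(c * (t:ℂ)))) t := by
    intro t
    have h1 : HasDerivAt (fun w : ℂ => Complex.exp (-(c * w)))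
        (-c * Complex.exp (-(c * (t:ℂ)))) (t:ℂ) := by
      have h2 : HasDerivAt (fun w : ℂ => -(c * w)) (-c) (t:ℂ) := by
        have h3 := ((hasDerivAt_id ((t:ℝ):ℂ)).const_mul c).neg
        simp only [id, mul_one] at h3
        exact h3
      simpa [mul_comm, Function.comp_def] using (Complex.hasDerivAt_exp (-(c * (t:ℂ)))).comp (t:ℂ) h2
    exact h1.comp_ofReal
  set φ : ℝ → ℂ := fun t => g t * Complex.exp (-(c * (t:ℂ))) with hφdef
  have hφd : ∀ t : ℝ, HasDerivAt φ 0 t := by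
    intro t
    have := (hderc t).mul (hexp t)
    refine this.congr_deriv ?_
    ring
  have hφconst : ∀ t : ℝ, φ t = φ 0 :=
    fun t => is_const_of_deriv_eq_zero (fun x => (hφd x).differentiableAt)
      (fun x => (hφd x).deriv) t 0
  have hgexp : ∀ t : ℝ, g t = Complex.exp (c * (t:ℂ)) := by
    intro t
    have h1 := hφconst t
    simp only [hφdef, h0] at h1
    push_cast at h1
    rw [mul_zero, neg_zero, Complex.exp_zero, mul_one] at h1
    have h2 : Complex.exp (-(c * (t:ℂ))) = (Complex.exp (c * (t:ℂ)))⁻¹ := by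
      rw [← Complex.exp_neg]
    rw [h2] at h1
    field_simp at h1
    exact h1
  have hre : c.re = 0 := by
    have h1 := habs 1
    rw [hgexp 1, Complex.norm_exp] at h1
    simpa using h1
  refine ⟨c.im, fun t => ?_⟩
  rw [hgexp t]
  congr 1
  apply Complex.ext <;> simp [hre]

/-- A normalized Δσ-twisted positive definite noise function satisfying the
homomorphism identity f(ξ+η) = exp((i/2)Δσ(ξ,η)) f(ξ) f(η) has |f| ≡ 1, forces Δσ = 0,
and, if f is continuous (on a finite-dimensional Ξ_out), f(ξ) = exp(i⟨λ,ξ⟩) for some λ in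
the dual space. -/
theorem noiseless_channel_characterization {Ξout Ξin : Type*}
    [NormedAddCommGroup Ξout] [NormedSpace ℝ Ξout] [FiniteDimensional ℝ Ξout]
    [AddCommGroup Ξin] [Module ℝ Ξin]
    (σout : Ξout →ₗ[ℝ] Ξout →ₗ[ℝ] ℝ) (σin : Ξin →ₗ[ℝ] Ξin →ₗ[ℝ] ℝ)
    (hout : ∀ ξ η : Ξout, σout ξ η = - σout η ξ)
    (hin : ∀ ξ η : Ξin, σin ξ η = - σin η ξ)
    (S : Ξout →ₗ[ℝ] Ξin) (f : Ξout → ℂ)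
    (hf : IsTwistedPosDef (fun ξ η => σout ξ η - σin (S ξ) (S η)) f)
    (hnorm : f 0 = 1)
    (hhom : ∀ ξ η : Ξout, f (ξ + η) =
      Complex.exp ((Complex.I / 2) * (((σout ξ η - σin (S ξ) (S η)) : ℝ) : ℂ)) * f ξ * f η) :
    (∀ ξ : Ξout, ‖f ξ‖ = 1) ∧
    (∀ ξ η : Ξout, σout ξ η - σin (S ξ) (S η) = 0) ∧
    (Continuous f → ∃ lam : Ξout →ₗ[ℝ] ℝ,
      ∀ ξ : Ξout, f ξ = Complex.exp (Complex.I * ((lam ξ : ℝ) : ℂ))) := by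
  have hDdiag : ∀ ξ : Ξout, σout ξ ξ - σin (S ξ) (S ξ) = 0 := by
    intro ξ
    have h1 := hout ξ ξ
    have h2 := hin (S ξ) (S ξ)
    linarith
  have hinv : ∀ ξ : Ξout, f ξ * f (-ξ) = 1 := by
    intro ξ
    have h := hhom ξ (-ξ)
    have hd : σout ξ (-ξ) - σin (S ξ) (S (-ξ)) = 0 := by
      rw [map_neg S, map_neg (σout ξ), map_neg (σin (S ξ))]
      have := hDdiag ξ
      linarith
    rw [hd] at h
    rw [add_neg_cancel, hnorm] at h
    simpa using h.symm
  have hfne : ∀ ξ : Ξout, f ξ ≠ 0 := by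
    intro ξ h
    have := hinv ξ
    rw [h, zero_mul] at this
    exact zero_ne_one this
  -- zero values of the twist
  have hD00 : σout 0 0 - σin (S 0) (S 0) = (0:ℝ) := by simp
  have hD0 : ∀ η : Ξout, σout 0 η - σin (S 0) (S η) = (0:ℝ) := by intro η; simp
  have hD0' : ∀ ξ : Ξout, σout ξ 0 - σin (S ξ) (S 0) = (0:ℝ) := by intro ξ; simp
  -- |f| ≡ 1
  have habs : ∀ ξ : Ξout, ‖f ξ‖ = 1 := by
    intro ξ
    set r : ℝ := ‖f ξ‖ with hrdef
    have hr : 0 < r := by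
      rw [hrdef]
      exact norm_pos_iff.mpr (hfne ξ)
    have hrne : (r : ℂ) ≠ 0 := by exact_mod_cast hr.ne'
    have hsum : twistedSum (fun ξ η => σout ξ η - σin (S ξ) (S η)) f ![0, ξ]
        ![1, -((starRingEnd ℂ) (f ξ)) / (r : ℂ)] = ((2 - r - r⁻¹ : ℝ) : ℂ) := by
      simp only [twistedSum, Fin.sum_univ_two, Matrix.cons_val_zero, Matrix.cons_val_one,
        Matrix.head_cons, hD00, hD0, hD0', hDdiag, sub_zero, zero_sub, sub_self, hnorm,
        Complex.ofReal_zero, mul_zero, Complex.exp_zero, mul_one, map_one, one_mul, map_div₀,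
        map_neg, Complex.conj_conj, Complex.conj_ofReal]
      have hc : (starRingEnd ℂ) (f ξ) * f ξ = ((r^2 : ℝ) : ℂ) := by
        rw [← Complex.normSq_eq_conj_mul_self, Complex.normSq_eq_norm_sq, ← hrdef]
      rw [neg_zero, hnorm]
      have expand : (1:ℂ) + -(starRingEnd ℂ) (f ξ) / ↑r * f ξ +
          (-f ξ / ↑r * f (-ξ) + -f ξ / ↑r * (-(starRingEnd ℂ) (f ξ) / ↑r)) =
          1 - ((starRingEnd ℂ) (f ξ) * f ξ)/(r:ℂ) - (f ξ * f (-ξ))/(r:ℂ)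
            + ((starRingEnd ℂ) (f ξ) * f ξ)/((r:ℂ)*(r:ℂ)) := by ring
      rw [expand, hc, hinv]
      push_cast
      field_simp
      ring
    have hps := (hf 2 ![0, ξ] ![1, -((starRingEnd ℂ) (f ξ)) / (r : ℂ)]).1
    rw [hsum] at hps
    rw [Complex.ofReal_re] at hps
    have h4 : 0 ≤ (2 - r - r⁻¹) * r := mul_nonneg hps hr.le
    have h5 : (2 - r - r⁻¹) * r = -(r - 1)^2 := by field_simp; ring
    rw [h5] at h4
    have h3 : r - 1 = 0 := by nlinarith [sq_nonneg (r - 1)]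
    rw [hrdef] at *
    linarith
  -- twist vanishes
  have hexp1 : ∀ ξ η : Ξout,
      Complex.exp (Complex.I * ((σout ξ η - σin (S ξ) (S η) : ℝ) : ℂ)) = 1 := by
    intro ξ η
    have h1 := hhom ξ η
    have h2 := hhom η ξ
    rw [add_comm η ξ] at h2
    have h3 := h1.symm.trans h2
    have hne : f ξ * f η ≠ 0 := mul_ne_zero (hfne ξ) (hfne η)
    have h4 : Complex.exp ((Complex.I / 2) * ((σout ξ η - σin (S ξ) (S η) : ℝ) : ℂ)) =
        Complex.exp ((Complex.I / 2) * ((σout η ξ - σin (S η) (S ξ) : ℝ) : ℂ)) := by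
      have h5 : Complex.exp ((Complex.I / 2) * ((σout ξ η - σin (S ξ) (S η) : ℝ) : ℂ)) *
          (f ξ * f η) = Complex.exp ((Complex.I / 2) *
            ((σout η ξ - σin (S η) (S ξ) : ℝ) : ℂ)) * (f ξ * f η) := by
        rw [← mul_assoc, ← mul_assoc, h3]; ring
      exact mul_right_cancel₀ hne h5
    have hskew : σout η ξ - σin (S η) (S ξ) = -(σout ξ η - σin (S ξ) (S η)) := by
      rw [hout ξ η, hin (S ξ) (S η)] at *
      ring
    rw [hskew] at h4
    calc Complex.exp (Complex.I * ((σout ξ η - σin (S ξ) (S η) : ℝ) : ℂ))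
        = Complex.exp ((Complex.I / 2) * ((σout ξ η - σin (S ξ) (S η) : ℝ) : ℂ)) /
          Complex.exp ((Complex.I / 2) * ((-(σout ξ η - σin (S ξ) (S η)) : ℝ) : ℂ)) := by
          rw [← Complex.exp_sub]; congr 1; push_cast; ring
      _ = 1 := by rw [← h4, div_self (Complex.exp_ne_zero _)]
  have hDzero : ∀ ξ η : Ξout, σout ξ η - σin (S ξ) (S η) = 0 := by
    intro ξ η
    apply pi_trick
    intro t
    have h1 := hexp1 (t • ξ) η
    have h2 : σout (t • ξ) η - σin (S (t • ξ)) (S η) =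
        (σout ξ η - σin (S ξ) (S η)) * t := by
      rw [map_smul, map_smul]
      simp [smul_eq_mul]
      ring
    rwa [h2] at h1
  refine ⟨habs, hDzero, ?_⟩
  intro hcont
  have hmul : ∀ ξ η : Ξout, f (ξ + η) = f ξ * f η := by
    intro ξ η
    have h := hhom ξ η
    rw [hDzero ξ η] at h
    simpa using h
  have hex : ∀ ξ : Ξout, ∃ b : ℝ, ∀ t : ℝ,
      f (t • ξ) = Complex.exp (Complex.I * (b : ℂ) * (t : ℂ)) := by
    intro ξ
    apply cont_char_real (fun t => f (t • ξ))
    · exact hcont.comp (continuous_id.smul continuous_const)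
    · simp [hnorm]
    · intro s t
      have : (s + t) • ξ = s • ξ + t • ξ := add_smul s t ξ
      rw [this, hmul]
    · intro t; exact habs _
  choose B hB using hex
  have hBadd : ∀ ξ η : Ξout, B (ξ + η) = B ξ + B η := by
    intro ξ η
    apply exp_line_unique
    intro t
    rw [← hB (ξ + η) t, smul_add, hmul, hB ξ t, hB η t, ← Complex.exp_add]
    congr 1
    push_cast
    ring
  have hBsmul : ∀ (s : ℝ) (ξ : Ξout), B (s • ξ) = s * B ξ := by
    intro s ξ
    apply exp_line_unique
    intro t
    rw [← hB (s • ξ) t, smul_smul, hB ξ (t * s)]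
    congr 1
    push_cast
    ring
  refine ⟨{ toFun := B, map_add' := hBadd,
            map_smul' := fun s ξ => by simp [hBsmul, smul_eq_mul] }, fun ξ => ?_⟩
  have h := hB ξ 1
  rw [one_smul] at h
  rw [h]
  simp
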